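/- Let X, 𝒜, σ, σ̃ be as in the context. Then the commutant 𝒜′ of 𝒜 in the crossed product 𝒜⋊_σ̃ℤ equals {Σ_{n∈ℤ} fₙδⁿ : for every n ∈ ℤ, fₙ vanishes identically on Sepⁿ_𝒜(X)}. Moreover 𝒜′ is commutative and is the unique maximal commutative subalgebra of 𝒜⋊_σ̃ℤ containing 𝒜; that is, every commutative subalgebra of 𝒜⋊_σ̃ℤ containing 𝒜 is contained in 𝒜′. -/

import Mathlib

open scoped Classical

noncomputable section

namespace PaperTRS

/-- The algebra of complex valued functions constant on each set of the family `P`. -/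
def partAlg {X J : Type*} (P : J → Set X) : Subalgebra ℂ (X → ℂ) where
  carrier := {h | ∀ i, ∀ x ∈ P i, ∀ y ∈ P i, h x = h y}
  mul_mem' := by
    intro a b ha hb i x hx y hy
    simp only [Pi.mul_apply, ha i x hx y hy, hb i x hx y hy]
  add_mem' := by
    intro a b ha hb i x hx y hy
    simp only [Pi.add_apply, ha i x hx y hy, hb i x hx y hy]
  algebraMap_mem' := by intro r i x hx y hy; rfl

/-- Piecewise constant functions on `ℝ` whose jumps all lie in the set `T`. -/
def pcAlgOn (T : Set ℝ) : Subalgebra ℂ (ℝ → ℂ) where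
  carrier := {h | ∀ x y : ℝ, x ∉ T → y ∉ T →
    (∀ u ∈ T, u ∉ Set.Icc (min x y) (max x y)) → h x = h y}
  mul_mem' := by
    intro a b ha hb x y hx hy hxy
    simp only [Pi.mul_apply, ha x y hx hy hxy, hb x y hx hy hxy]
  add_mem' := by
    intro a b ha hb x y hx hy hxy
    simp only [Pi.add_apply, ha x y hx hy hxy, hb x y hx hy hxy]
  algebraMap_mem' := by intro r x y _ _ _; rfl

/-- Invariance of an algebra of functions under a self-map of `X`. -/
def AlgInvariant {X : Type*} (A : Subalgebra ℂ (X → ℂ)) (σ : X → X) : Prop :=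
  ∀ h ∈ A, (h ∘ σ) ∈ A

/-- `Sep A σ n = {x | ∃ h ∈ A, h x ≠ σ̃ⁿ(h) x}`, where `σ̃ⁿ(h) = h ∘ σ⁻ⁿ`. -/
def Sep {X : Type*} (A : Subalgebra ℂ (X → ℂ)) (σ : Equiv.Perm X) (n : ℤ) : Set X :=
  {x | ∃ h ∈ A, h x ≠ h ((σ ^ n)⁻¹ x)}

/-- Twisted convolution product on the crossed product `⋊ ℤ`:
`(fₙ δⁿ) * (gₘ δᵐ) = fₙ · σ̃ⁿ(gₘ) · δ^{n+m}` extended bilinearly. -/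
def cmul {X : Type*} (σ : Equiv.Perm X) (f g : ℤ →₀ (X → ℂ)) : ℤ →₀ (X → ℂ) :=
  f.sum fun n a => g.sum fun m b =>
    Finsupp.single (n + m) (fun x => a x * b ((σ ^ n)⁻¹ x))

/-- Membership of an element `Σ fₙ δⁿ` in the crossed product of the algebra `B` with `ℤ`. -/
def InCrossed {X : Type*} (B : Subalgebra ℂ (X → ℂ)) (f : ℤ →₀ (X → ℂ)) : Prop :=
  ∀ n, f n ∈ B

/-- The commutant of `A` inside the crossed product `B ⋊ ℤ` (where `A ⊆ B`). -/
def commutant {X : Type*} (A B : Subalgebra ℂ (X → ℂ)) (σ : Equiv.Perm X) :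
    Set (ℤ →₀ (X → ℂ)) :=
  {f | InCrossed B f ∧
    ∀ a ∈ A, cmul σ f (Finsupp.single 0 a) = cmul σ (Finsupp.single 0 a) f}

/-- The jump points `t₁ < ⋯ < t_N` extended by `t₀ = -∞` and `t_{N+1} = +∞`. -/
def tE (N : ℕ) (t : Fin N → ℝ) (i : ℕ) : EReal :=
  if h : 1 ≤ i ∧ i ≤ N then ((t ⟨i - 1, by omega⟩ : ℝ) : EReal)
  else if i = 0 then ⊥ else ⊤

/-- The open interval `I_i = (t_i, t_{i+1})` for `0 ≤ i ≤ N`. -/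
def openPiece (N : ℕ) (t : Fin N → ℝ) (i : ℕ) : Set ℝ :=
  {x : ℝ | tE N t i < (x : EReal) ∧ (x : EReal) < tE N t (i + 1)}

/-- The sets of the partition of `ℝ` determined by the jump points: the open
intervals `I_0, …, I_N` together with the singletons `{t_i}`. -/
def pieces (N : ℕ) (t : Fin N → ℝ) : Set (Set ℝ) :=
  {P | (∃ i : ℕ, i ≤ N ∧ P = openPiece N t i) ∨ (∃ i : Fin N, P = {t i})}

/-- `C_k`: points `x` such that `k` is the smallest positive integer with `x` and
`σᵏ(x)` in one common set of the partition. -/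
def Ck (N : ℕ) (t : Fin N → ℝ) (σ : Equiv.Perm ℝ) (k : ℕ) : Set ℝ :=
  {x | IsLeast {j : ℕ | 0 < j ∧ ∃ P ∈ pieces N t, x ∈ P ∧ (σ ^ j) x ∈ P} k}

end PaperTRS
namespace PaperTRS

/-- With `p` points `s i 0 < ⋯ < s i (p-1)` added in the interval `I_{α i}`, the `j`-th
open subinterval of the refined partition of `I_{α i}`, for `j = 0, …, p`. -/
def subPiece (N : ℕ) (t : Fin N → ℝ) {k p : ℕ} (α : Fin k → ℕ)
    (s : Fin k → Fin p → ℝ) (i : Fin k) (j : Fin (p + 1)) : Set ℝ :=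
  {x : ℝ |
    (if hj : (j : ℕ) = 0 then tE N t (α i)
      else ((s i ⟨(j : ℕ) - 1, by have := j.isLt; omega⟩ : ℝ) : EReal)) < (x : EReal) ∧
    (x : EReal) <
      (if hj : (j : ℕ) = p then tE N t (α i + 1)
        else ((s i ⟨(j : ℕ), by have := j.isLt; omega⟩ : ℝ) : EReal))}

/-- The sets of the refined partition of the union of the intervals `I_{α i}`: the open
subintervals determined by the added jump points together with the singleton jump points. -/
def cyclePieces (N : ℕ) (t : Fin N → ℝ) {k p : ℕ} (α : Fin k → ℕ)
    (s : Fin k → Fin p → ℝ) : Set (Set ℝ) :=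
  {P | (∃ i j, P = subPiece N t α s i j) ∨ (∃ i j, P = ({s i j} : Set ℝ))}

/-- `C̃_r`: points `x` of `⋃ᵢ I_{α i}` such that `r` is the smallest positive integer with
`x` and `σʳ(x)` in one common set of the refined partition. -/
def Ctil (N : ℕ) (t : Fin N → ℝ) (σ : Equiv.Perm ℝ) {k p : ℕ} (α : Fin k → ℕ)
    (s : Fin k → Fin p → ℝ) (r : ℕ) : Set ℝ :=
  {x | x ∈ ⋃ i, openPiece N t (α i) ∧
    IsLeast {j : ℕ | 0 < j ∧ ∃ P ∈ cyclePieces N t α s, x ∈ P ∧ (σ ^ j) x ∈ P} r}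

/-- The cyclic setup: `k` pairwise distinct open intervals `I_{α 0}, …, I_{α (k-1)}` of the
original partition, contained in `C_k` and permuted cyclically by `σ`, with `p` jump points
`s i 0 < ⋯ < s i (p-1)` added into each of them, and both the original algebra `𝒜` and the
refined algebra `𝒜_S` invariant under `σ` and `σ⁻¹`. -/
def CyclicSetup (N : ℕ) (t : Fin N → ℝ) (σ : Equiv.Perm ℝ) {k p : ℕ} (α : Fin k → ℕ)
    (s : Fin k → Fin p → ℝ) : Prop :=
  0 < k ∧ (∀ i, α i ≤ N) ∧ Function.Injective α ∧
  (∀ i j, s i j ∈ openPiece N t (α i)) ∧ (∀ i, StrictMono (s i)) ∧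
  (∀ i : Fin k, ∃ i' : Fin k, ((i' : ℕ) = ((i : ℕ) + 1) % k) ∧
    σ '' openPiece N t (α i) = openPiece N t (α i')) ∧
  (∀ i, openPiece N t (α i) ⊆ Ck N t σ k) ∧
  AlgInvariant (pcAlgOn (Set.range t)) σ ∧
  AlgInvariant (pcAlgOn (Set.range t)) σ.symm ∧
  AlgInvariant (pcAlgOn (Set.range t ∪ ⋃ i, Set.range (s i))) σ ∧
  AlgInvariant (pcAlgOn (Set.range t ∪ ⋃ i, Set.range (s i))) σ.symm

/-- `C_k` for the partition `P` of a general set `X`. -/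
def CkGen {X ι : Type*} (P : ι → Set X) (σ : Equiv.Perm X) (k : ℕ) : Set X :=
  {x | IsLeast {j : ℕ | 0 < j ∧ ∃ i, x ∈ P i ∧ (σ ^ j) x ∈ P i} k}

/-- `C̃_r` relative to a family `Q` of refined pieces inside the subset `base` of `X`. -/
def CtilGen {X ι : Type*} (σ : Equiv.Perm X) (Q : ι → Set X) (base : Set X) (r : ℕ) :
    Set X :=
  {x | x ∈ base ∧ IsLeast {j : ℕ | 0 < j ∧ ∃ i, x ∈ Q i ∧ (σ ^ j) x ∈ Q i} r}

/-- `C_∞`: points that never return to the partition set they lie in. -/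
def Cinf {X ι : Type*} (P : ι → Set X) (σ : Equiv.Perm X) : Set X :=
  {x | ∀ k : ℕ, 0 < k → ¬∃ i, x ∈ P i ∧ (σ ^ k) x ∈ P i}

end PaperTRS
namespace PaperTRS

lemma cmul_single_zero_right {X : Type*} (σ : Equiv.Perm X) (f : ℤ →₀ (X → ℂ)) (a : X → ℂ) :
    cmul σ f (Finsupp.single 0 a) =
      f.sum fun n c => Finsupp.single n (fun x => c x * a ((σ ^ n)⁻¹ x)) := by
  unfold cmul
  refine Finsupp.sum_congr fun n _ => ?_
  rw [Finsupp.sum_single_index]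
  · simp
  · simp only [mul_zero, Pi.zero_apply]
    convert Finsupp.single_zero (n + 0)
    rfl

lemma cmul_single_zero_left {X : Type*} (σ : Equiv.Perm X) (f : ℤ →₀ (X → ℂ)) (a : X → ℂ) :
    cmul σ (Finsupp.single 0 a) f =
      f.sum fun m c => Finsupp.single m (fun x => a x * c x) := by
  unfold cmul
  rw [Finsupp.sum_single_index]
  · refine Finsupp.sum_congr fun m _ => ?_
    simp
  · simp only [Pi.zero_apply, zero_mul]
    rw [Finsupp.sum]
    refine Finset.sum_eq_zero fun m _ => ?_
    convert Finsupp.single_zero (0 + m)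
    rfl

lemma sum_single_apply' {X : Type*} (f : ℤ →₀ (X → ℂ)) (h : ℤ → (X → ℂ) → (X → ℂ))
    (hz : ∀ n, h n 0 = 0) (n : ℤ) :
    (f.sum fun i c => Finsupp.single i (h i c)) n = h n (f n) := by
  classical
  rw [Finsupp.sum_apply, Finsupp.sum]
  by_cases hn : n ∈ f.support
  · rw [Finset.sum_eq_single n (fun i _ hi => Finsupp.single_eq_of_ne' hi)
      (fun h => absurd hn h), Finsupp.single_eq_same]
  · rw [Finsupp.notMem_support_iff.1 hn, hz]
    exact Finset.sum_eq_zero fun i hi =>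
      Finsupp.single_eq_of_ne' (fun h => hn (h ▸ hi))

/-- the commutant of `𝒜` in `𝒜 ⋊_σ̃ ℤ` is
`{Σ fₙδⁿ : fₙ vanishes on Sepⁿ_𝒜(X) for all n}`; it contains `𝒜`, it is commutative, and
every commutative subalgebra of the crossed product containing `𝒜` is contained in it. -/
theorem statement0 {X : Type*} (A : Subalgebra ℂ (X → ℂ)) (σ : Equiv.Perm X)
    (hinv : AlgInvariant A σ) (hinv' : AlgInvariant A σ.symm) :
    commutant A A σ =
      {f : ℤ →₀ (X → ℂ) | InCrossed A f ∧ ∀ n : ℤ, ∀ x ∈ Sep A σ n, f n x = 0} ∧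
    (∀ a ∈ A, Finsupp.single (0 : ℤ) a ∈ commutant A A σ) ∧
    (∀ f ∈ commutant A A σ, ∀ g ∈ commutant A A σ, cmul σ f g = cmul σ g f) ∧
    (∀ S : Set (ℤ →₀ (X → ℂ)),
      (∀ f ∈ S, InCrossed A f) →
      (∀ a ∈ A, Finsupp.single (0 : ℤ) a ∈ S) →
      (∀ f ∈ S, ∀ g ∈ S, f + g ∈ S) →
      (∀ c : ℂ, ∀ f ∈ S, c • f ∈ S) →
      (∀ f ∈ S, ∀ g ∈ S, cmul σ f g ∈ S) →
      (∀ f ∈ S, ∀ g ∈ S, cmul σ f g = cmul σ g f) →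
      S ⊆ commutant A A σ) := by
  classical
  -- pointwise commutation property extracted from membership in the commutant
  have pt : ∀ f ∈ commutant A A σ, ∀ n : ℤ, ∀ a ∈ A, ∀ x : X,
      f n x * a ((σ ^ n)⁻¹ x) = a x * f n x := by
    intro f hf n a ha x
    have h := hf.2 a ha
    rw [cmul_single_zero_right, cmul_single_zero_left] at h
    have hL := sum_single_apply' f (fun i c => fun x => c x * a ((σ ^ i)⁻¹ x))
      (fun i => by funext x; simp) n
    have hR := sum_single_apply' f (fun i c => fun x => a x * c x)
      (fun i => by funext x; simp) n
    have h2 := congrArg (fun F : ℤ →₀ (X → ℂ) => F n) h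
    rw [hL, hR] at h2
    exact congrFun h2 x
  -- the vanishing condition implies membership in the commutant
  have vsh : ∀ f : ℤ →₀ (X → ℂ), InCrossed A f →
      (∀ n : ℤ, ∀ x ∈ Sep A σ n, f n x = 0) → f ∈ commutant A A σ := by
    intro f hic hv
    refine ⟨hic, fun a ha => ?_⟩
    rw [cmul_single_zero_right, cmul_single_zero_left]
    refine Finsupp.sum_congr fun n _ => ?_
    congr 1
    funext x
    by_cases hx : x ∈ Sep A σ n
    · rw [hv n x hx, zero_mul, mul_zero]
    · have hax : a ((σ ^ n)⁻¹ x) = a x := by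
        by_contra h
        exact hx ⟨a, ha, fun h' => h h'.symm⟩
      rw [hax, mul_comm]
  -- membership in commutant implies vanishing
  have cvs : ∀ f ∈ commutant A A σ, ∀ n : ℤ, ∀ x ∈ Sep A σ n, f n x = 0 := by
    intro f hf n x hx
    obtain ⟨h, hhA, hne⟩ := hx
    have hp := pt f hf n h hhA x
    by_contra hz
    have := mul_left_cancel₀ hz (hp.trans (mul_comm (h x) (f n x)))
    exact hne this.symm
  refine ⟨?_, ?_, ?_, ?_⟩
  · ext f
    exact ⟨fun hf => ⟨hf.1, cvs f hf⟩, fun hf => vsh f hf.1 hf.2⟩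
  · intro a ha
    refine vsh _ (fun n => ?_) (fun n x hx => ?_)
    · rcases eq_or_ne n 0 with rfl | hn
      · rw [Finsupp.single_eq_same]; exact ha
      · rw [Finsupp.single_eq_of_ne' (Ne.symm hn)]; exact zero_mem A
    · rcases eq_or_ne n 0 with rfl | hn
      · obtain ⟨h, _, hne⟩ := hx
        exact absurd (by simp) hne
      · rw [Finsupp.single_eq_of_ne' (Ne.symm hn)]; rfl
  · intro f hf g hg
    unfold cmul
    rw [Finsupp.sum, Finsupp.sum]
    simp only [Finsupp.sum]
    rw [Finset.sum_comm]
    refine Finset.sum_congr rfl fun m hm => Finset.sum_congr rfl fun n hn => ?_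
    rw [add_comm]
    congr 1
    funext x
    rw [pt f hf n (g m) (hg.1 m) x, pt g hg m (f n) (hf.1 n) x, mul_comm]
  · intro S hSin hSsingle _ _ _ hScomm f hf
    exact ⟨hSin f hf, fun a ha => hScomm f hf _ (hSsingle a ha)⟩

end PaperTRS
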